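/- Let F be a field of characteristic p containing F_q and let f ∈ F[x] be a separable polynomial. The minimal q-degree of a nonzero q-linearized polynomial L ∈ F[x] divisible by f equals the F_q-dimension of the span of the roots of f in a splitting field of f over F. -/

import Mathlib

open Polynomial Finset

section Helpers

variable {E : Type} [Field E]

private lemma qlin_coeff {q : ℕ} (hq2 : 2 ≤ q) (b : ℕ → E) {k i : ℕ} (hik : i ≤ k) :
    (∑ j ∈ Finset.range (k + 1), C (b j) * X ^ q ^ j).coeff (q ^ i) = b i := by
  rw [finset_sum_coeff]
  rw [Finset.sum_eq_single i]
  · simp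
  · intro j hj hji
    rw [coeff_C_mul, coeff_X_pow, if_neg, mul_zero]
    exact fun h => hji ((Nat.pow_right_injective hq2 h).symm)
  · intro h
    exact absurd (Finset.mem_range.mpr (Nat.lt_succ_of_le hik)) h

private lemma qlin_eval {q : ℕ} (b : ℕ → E) (k : ℕ) (x : E) :
    (∑ j ∈ Finset.range (k + 1), C (b j) * X ^ q ^ j).eval x
      = ∑ j ∈ Finset.range (k + 1), b j * x ^ q ^ j := by
  rw [eval_finset_sum]
  simp

private lemma qlin_monic {q : ℕ} (hq2 : 2 ≤ q) {b : ℕ → E} {k : ℕ} (hb : b k = 1) :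
    (∑ j ∈ Finset.range (k + 1), C (b j) * X ^ q ^ j).Monic ∧
    (∑ j ∈ Finset.range (k + 1), C (b j) * X ^ q ^ j).natDegree = q ^ k := by
  have hrw : (∑ j ∈ Finset.range (k + 1), C (b j) * X ^ q ^ j)
      = X ^ q ^ k + ∑ j ∈ Finset.range k, C (b j) * X ^ q ^ j := by
    rw [Finset.sum_range_succ, hb, map_one, one_mul, add_comm]
  have hdeg : (∑ j ∈ Finset.range k, C (b j) * X ^ q ^ j).degree < ((q ^ k : ℕ) : WithBot ℕ) := by
    apply lt_of_le_of_lt (degree_sum_le _ _)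
    rw [Finset.sup_lt_iff (by exact_mod_cast WithBot.bot_lt_coe (q ^ k))]
    intro j hj
    apply lt_of_le_of_lt (degree_C_mul_X_pow_le _ _)
    exact_mod_cast Nat.pow_lt_pow_right (lt_of_lt_of_le one_lt_two hq2) (Finset.mem_range.mp hj)
  constructor
  · rw [hrw]; exact monic_X_pow_add hdeg
  · rw [hrw]
    have hdd : (X ^ q ^ k + ∑ j ∈ Finset.range k, C (b j) * X ^ q ^ j).degree
        = ((q ^ k : ℕ) : WithBot ℕ) := by
      rw [add_comm, degree_add_eq_right_of_degree_lt, degree_X_pow]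
      rwa [degree_X_pow]
    exact natDegree_eq_of_degree_eq_some hdd

private lemma prod_X_sub_C_dvd_of_isRoot (S : Finset E) (Q : E[X]) (hQ : Q ≠ 0)
    (h : ∀ v ∈ S, Q.IsRoot v) : (∏ v ∈ S, (X - C v)) ∣ Q := by
  classical
  apply Splits.dvd_of_roots_le_roots _ _ _
  · exact Splits.prod fun v _ => Splits.X_sub_C _
  · exact (monic_prod_of_monic _ _ fun v _ => monic_X_sub_C v).ne_zero
  · rw [roots_prod_X_sub_C]
    rw [Multiset.le_iff_count]
    intro v
    by_cases hv : v ∈ S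
    · have h1 : S.val.count v = 1 := Multiset.count_eq_one_of_mem S.nodup hv
      rw [h1, count_roots]
      exact (rootMultiplicity_pos hQ).mpr (h v hv)
    · rw [Multiset.count_eq_zero.mpr (by exact fun hc => hv hc)]
      exact Nat.zero_le _

private lemma monic_dvd_eq {R Q : E[X]} (hR : R.Monic) (hQ : Q.Monic)
    (hdeg : R.natDegree = Q.natDegree) (hdvd : R ∣ Q) : R = Q := by
  obtain ⟨c, rfl⟩ := hdvd
  have hc : c ≠ 0 := by
    intro h
    rw [h, mul_zero] at hQ
    exact hQ.ne_zero rfl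
  have hd : c.natDegree = 0 := by
    have := natDegree_mul hR.ne_zero hc
    omega
  have hc1 : c = C (c.coeff 0) := eq_C_of_natDegree_eq_zero hd
  have hl := hQ.leadingCoeff
  rw [leadingCoeff_mul, hR.leadingCoeff, one_mul, hc1, leadingCoeff_C] at hl
  rw [hc1, hl, map_one, mul_one]

end Helpers

section CharHelpers

variable {p a q : ℕ} [Fact p.Prime] {Fq E : Type} [Field Fq] [Fintype Fq] [Field E]
  [Algebra Fq E] [CharP E p]

private lemma pow_q_pow_add (hq : q = p ^ a) (x y : E) (i : ℕ) :
    (x + y) ^ q ^ i = x ^ q ^ i + y ^ q ^ i := by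
  subst hq
  rw [← pow_mul]
  exact add_pow_char_pow ..

private lemma algebraMap_pow_q_pow (hq : q = p ^ a) (hFq : Fintype.card Fq = q) (c : Fq) (i : ℕ) :
    (algebraMap Fq E c) ^ q ^ i = algebraMap Fq E c := by
  induction i with
  | zero => rw [pow_zero, pow_one]
  | succ n ih =>
    rw [pow_succ, pow_mul, ih, ← map_pow, ← hFq, FiniteField.pow_card]

private lemma qlin_eval_smul_add (hq : q = p ^ a) (hFq : Fintype.card Fq = q)
    (b : ℕ → E) (k : ℕ) (c : Fq) (x y : E) :
    (∑ j ∈ Finset.range (k + 1), C (b j) * X ^ q ^ j).eval (c • x + y)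
      = algebraMap Fq E c * (∑ j ∈ Finset.range (k + 1), C (b j) * X ^ q ^ j).eval x
        + (∑ j ∈ Finset.range (k + 1), C (b j) * X ^ q ^ j).eval y := by
  rw [qlin_eval, qlin_eval, qlin_eval, Finset.mul_sum, ← Finset.sum_add_distrib]
  apply Finset.sum_congr rfl
  intro j _
  rw [pow_q_pow_add hq, Algebra.smul_def, mul_pow, algebraMap_pow_q_pow hq hFq]
  ring

end CharHelpers

private lemma key (p a q : ℕ) [Fact p.Prime] (ha : 0 < a) (hq : q = p ^ a)
    (Fq E : Type) [Field Fq] [Fintype Fq] (hFq : Fintype.card Fq = q)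
    [Field E] [CharP E p] [Algebra Fq E] (t : Finset E) :
    ∀ (hW : ((Submodule.span Fq (t : Set E) : Submodule Fq E) : Set E).Finite),
    ∃ (k : ℕ) (b : ℕ → E), b k = 1 ∧ hW.toFinset.card = q ^ k ∧
      (∑ i ∈ Finset.range (k + 1), C (b i) * X ^ q ^ i) = ∏ v ∈ hW.toFinset, (X - C v) := by
  classical
  have hq2 : 2 ≤ q := by
    rw [hq]
    exact Nat.one_lt_pow ha.ne' (Fact.out : p.Prime).one_lt
  induction t using Finset.induction_on with
  | empty =>
    intro hW
    have hset : hW.toFinset = {0} := by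
      ext x
      simp [Set.Finite.mem_toFinset]
    refine ⟨0, fun _ => 1, rfl, ?_, ?_⟩
    · rw [hset]; simp
    · rw [hset]
      simp
  | @insert w s hws ih =>
    intro hW'
    haveI : Module.Finite Fq (Submodule.span Fq (s : Set E)) :=
      Module.Finite.span_of_finite Fq s.finite_toSet
    haveI : Finite (Submodule.span Fq (s : Set E)) := Module.finite_of_finite Fq
    have hWs : ((Submodule.span Fq (s : Set E) : Submodule Fq E) : Set E).Finite := Set.toFinite _
    obtain ⟨k, b, hb1, hcard, hP⟩ := ih hWs
    by_cases hw : w ∈ Submodule.span Fq (s : Set E)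
    · have hsp : Submodule.span Fq ((insert w s : Finset E) : Set E)
          = Submodule.span Fq (s : Set E) := by
        rw [Finset.coe_insert, Submodule.span_insert_eq_span hw]
      have hfs : hW'.toFinset = hWs.toFinset := by
        ext x
        rw [Set.Finite.mem_toFinset, Set.Finite.mem_toFinset, hsp]
      exact ⟨k, b, hb1, by rw [hfs]; exact hcard, by rw [hfs]; exact hP⟩
    · set P : E[X] := ∑ i ∈ Finset.range (k + 1), C (b i) * X ^ q ^ i with hPdef
      have hPz : ∀ u ∈ Submodule.span Fq (s : Set E), P.eval u = 0 := by
        intro u hu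
        rw [hP, eval_prod]
        apply Finset.prod_eq_zero (hWs.mem_toFinset.mpr hu)
        simp
      set θ : E := P.eval w with hθdef
      have hθ : θ ≠ 0 := by
        rw [hθdef, hP, eval_prod]
        apply Finset.prod_ne_zero_iff.mpr
        intro v hv
        simp only [eval_sub, eval_X, eval_C]
        exact sub_ne_zero.mpr fun h => hw (h ▸ hWs.mem_toFinset.mp hv)
      set b' : ℕ → E := fun i =>
        (if i = 0 then 0 else b (i - 1) ^ q) - θ ^ (q - 1) * (if i ≤ k then b i else 0) with hb'def
      have hb'1 : b' (k + 1) = 1 := by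
        simp [hb'def, Nat.succ_ne_zero, hb1]
      set Q : E[X] := ∑ i ∈ Finset.range (k + 1 + 1), C (b' i) * X ^ q ^ i with hQdef
      haveI : CharP E[X] p := charP_of_injective_ringHom (C_injective (R := E)) p
      haveI : ExpChar E[X] p := ExpChar.prime Fact.out
      have hsum_pow : (∑ i ∈ Finset.range (k + 1), C (b i) * X ^ q ^ i) ^ q
          = ∑ i ∈ Finset.range (k + 1), (C (b i) * X ^ q ^ i) ^ q := by
        rw [hq]
        exact sum_pow_char_pow ..
      have h1 : ∑ i ∈ Finset.range (k + 2), C (if i = 0 then (0:E) else b (i - 1) ^ q) * X ^ q ^ i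
          = P ^ q := by
        rw [Finset.sum_range_succ']
        simp only [if_neg (Nat.succ_ne_zero _), if_pos rfl, Nat.add_sub_cancel, map_zero,
          zero_mul, add_zero, reduceIte]
        rw [hPdef, hsum_pow]
        apply Finset.sum_congr rfl
        intro i _
        rw [mul_pow, ← C_pow, ← pow_mul, ← pow_succ]
      have h2 : ∑ i ∈ Finset.range (k + 2),
          C (θ ^ (q - 1) * (if i ≤ k then b i else 0)) * X ^ q ^ i = C (θ ^ (q - 1)) * P := by
        simp only [map_mul, mul_assoc]
        rw [← Finset.mul_sum]
        refine congrArg (C (θ ^ (q - 1)) * ·) ?_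
        rw [Finset.sum_range_succ, if_neg (Nat.not_succ_le_self k), map_zero, zero_mul, add_zero,
          hPdef]
        apply Finset.sum_congr rfl
        intro i hi
        rw [if_pos (Nat.lt_succ_iff.mp (Finset.mem_range.mp hi))]
      have hQeq : Q = P ^ q - C (θ ^ (q - 1)) * P := by
        rw [hQdef, ← h1, ← h2, ← Finset.sum_sub_distrib]
        apply Finset.sum_congr rfl
        intro i _
        rw [hb'def, map_sub, sub_mul]
      have hroots : ∀ v ∈ Submodule.span Fq ((insert w s : Finset E) : Set E), Q.eval v = 0 := by
        intro v hv
        rw [Finset.coe_insert, Submodule.mem_span_insert] at hv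
        obtain ⟨c, u, hu, rfl⟩ := hv
        have heval : P.eval (c • w + u) = algebraMap Fq E c * θ := by
          rw [hPdef, qlin_eval_smul_add hq hFq, ← hPdef, ← hθdef, hPz u hu, add_zero]
        have hcpow : (algebraMap Fq E c) ^ q = algebraMap Fq E c := by
          have := algebraMap_pow_q_pow (E := E) hq hFq c 1
          rwa [pow_one] at this
        rw [hQeq, eval_sub, eval_pow, eval_mul, eval_C, heval, mul_pow, hcpow]
        have hθq : θ ^ (q - 1) * θ = θ ^ q := by
          rw [← pow_succ, Nat.sub_add_cancel (by omega : 1 ≤ q)]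
        rw [mul_comm (θ ^ (q - 1)) _, mul_assoc, mul_comm θ (θ ^ (q - 1)), hθq, sub_self]
      have hQmonic := qlin_monic hq2 hb'1 (b := b') (k := k + 1)
      have himg : hW'.toFinset = ((Finset.univ : Finset Fq) ×ˢ hWs.toFinset).image
          (fun cu : Fq × E => cu.1 • w + cu.2) := by
        ext x
        rw [Set.Finite.mem_toFinset]
        constructor
        · intro hx
          simp only [Finset.coe_insert, SetLike.mem_coe, Submodule.mem_span_insert] at hx
          obtain ⟨c, u, hu, rfl⟩ := hx
          exact Finset.mem_image.mpr ⟨(c, u),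
            Finset.mem_product.mpr ⟨Finset.mem_univ _, hWs.mem_toFinset.mpr hu⟩, rfl⟩
        · intro hx
          obtain ⟨⟨c, u⟩, hcu, rfl⟩ := Finset.mem_image.mp hx
          simp only [Finset.coe_insert, SetLike.mem_coe, Submodule.mem_span_insert]
          exact ⟨c, u, hWs.mem_toFinset.mp (Finset.mem_product.mp hcu).2, rfl⟩
      have hinj : Set.InjOn (fun cu : Fq × E => cu.1 • w + cu.2)
          ↑((Finset.univ : Finset Fq) ×ˢ hWs.toFinset) := by
        rintro ⟨c1, u1⟩ h1' ⟨c2, u2⟩ h2' heq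
        simp only [Finset.coe_product, Set.mem_prod, Finset.mem_coe,
          Set.Finite.mem_toFinset] at h1' h2'
        simp only at heq
        by_cases hc : c1 = c2
        · subst hc
          have : u1 = u2 := by
            have := heq
            exact add_left_cancel this
          rw [this]
        · exfalso
          have hsub : (c1 - c2) • w = u2 - u1 := by
            rw [sub_smul]
            have : c1 • w + u1 = c2 • w + u2 := heq
            linear_combination (norm := module) this
          have hwmem : w ∈ Submodule.span Fq (s : Set E) := by
            have : w = (c1 - c2)⁻¹ • ((c1 - c2) • w) :=
              (inv_smul_smul₀ (sub_ne_zero.mpr hc) w).symm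
            rw [this, hsub]
            exact Submodule.smul_mem _ _ (Submodule.sub_mem _ h2'.2 h1'.2)
          exact hw hwmem
      have hW'card : hW'.toFinset.card = q ^ (k + 1) := by
        rw [himg, Finset.card_image_of_injOn hinj, Finset.card_product, Finset.card_univ, hFq,
          hcard, pow_succ']
      have hRmonic : (∏ v ∈ hW'.toFinset, (X - C v)).Monic :=
        monic_prod_of_monic _ _ fun v _ => monic_X_sub_C v
      have hRdeg : (∏ v ∈ hW'.toFinset, (X - C v)).natDegree = q ^ (k + 1) := by
        rw [natDegree_prod _ _ fun v _ => X_sub_C_ne_zero v]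
        simp only [natDegree_X_sub_C, Finset.sum_const, smul_eq_mul, mul_one]
        exact hW'card
      have hdvd : (∏ v ∈ hW'.toFinset, (X - C v)) ∣ Q := by
        apply prod_X_sub_C_dvd_of_isRoot _ _ hQmonic.1.ne_zero
        intro v hv
        exact hroots v (hW'.mem_toFinset.mp hv)
      exact ⟨k + 1, b', hb'1, hW'card,
        (monic_dvd_eq hRmonic hQmonic.1 (by rw [hRdeg, hQmonic.2]) hdvd).symm⟩


theorem stmt_4 (p a q : ℕ) [Fact p.Prime] (ha : 0 < a) (hq : q = p ^ a)
    (Fq F E : Type) [Field Fq] [Fintype Fq] (hFq : Fintype.card Fq = q)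
    [Field F] [CharP F p] [Algebra Fq F] [Field E] [Algebra F E] [Algebra Fq E]
    [IsScalarTower Fq F E]
    (f : F[X]) (hf : f.Separable) (hf0 : f ≠ 0)
    (hsplit : f.IsSplittingField F E) :
    IsLeast {d : ℕ | ∃ b : ℕ → F, b d ≠ 0 ∧
        f ∣ ∑ i ∈ Finset.range (d + 1), C (b i) * X ^ q ^ i}
      (Module.finrank Fq (Submodule.span Fq (f.rootSet E))) := by
  classical
  haveI : CharP E p := charP_of_injective_ringHom (algebraMap F E).injective p
  haveI := hsplit
  haveI : FiniteDimensional F E := IsSplittingField.finiteDimensional E f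
  haveI : IsGalois F E := IsGalois.of_separable_splitting_field hf
  have hq2 : 2 ≤ q := by
    rw [hq]; exact Nat.one_lt_pow ha.ne' (Fact.out : p.Prime).one_lt
  set V : Submodule Fq E := Submodule.span Fq (f.rootSet E) with hVdef
  haveI : Module.Finite Fq V := Module.Finite.span_of_finite Fq (f.rootSet_finite E)
  haveI : Finite V := Module.finite_of_finite Fq
  have hVfin : ((V : Submodule Fq E) : Set E).Finite := Set.toFinite _
  set n := Module.finrank Fq V with hndef
  have hrs : (f.rootSet E).Finite := f.rootSet_finite E
  have hspan : Submodule.span Fq ((hrs.toFinset : Finset E) : Set E) = V := by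
    rw [Set.Finite.coe_toFinset]
  have hWfin : ((Submodule.span Fq ((hrs.toFinset : Finset E) : Set E) :
      Submodule Fq E) : Set E).Finite := by rw [hspan]; exact hVfin
  obtain ⟨k, b, hb1, hcard, hP⟩ := key p a q ha hq Fq E hFq hrs.toFinset hWfin
  have hfs : hWfin.toFinset = hVfin.toFinset := by
    ext x
    rw [Set.Finite.mem_toFinset, Set.Finite.mem_toFinset, hspan]
  rw [hfs] at hcard hP
  -- identify k with n
  haveI : Fintype V := Fintype.ofFinite V
  have hcardV : hVfin.toFinset.card = q ^ n := by
    have h1 : ((V : Submodule Fq E) : Set E).ncard = hVfin.toFinset.card :=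
      Set.ncard_eq_toFinset_card _ hVfin
    have h2 : Nat.card (↥((V : Submodule Fq E) : Set E)) = ((V : Submodule Fq E) : Set E).ncard :=
      Nat.card_coe_set_eq _
    have h3 : Nat.card (↥((V : Submodule Fq E) : Set E)) = Nat.card V := rfl
    rw [← h1, ← h2, h3, Nat.card_eq_fintype_card, Module.card_eq_pow_finrank (K := Fq) (V := V), hFq]
  have hkn : k = n := Nat.pow_right_injective hq2 (show q ^ k = q ^ n by rw [← hcard, hcardV])
  subst hkn
  constructor
  · -- membership
    have hσmem : ∀ (σ : E ≃ₐ[F] E) (x : E), x ∈ V → σ x ∈ V := by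
      intro σ x hx
      have halg : ∀ cc : Fq, σ (algebraMap Fq E cc) = algebraMap Fq E cc := by
        intro cc
        rw [IsScalarTower.algebraMap_apply Fq F E, σ.commutes]
      let σl : E →ₗ[Fq] E :=
        { toFun := σ
          map_add' := map_add σ
          map_smul' := by
            intro cc y
            simp only [RingHom.id_apply, Algebra.smul_def, map_mul, halg] }
      have h1 : σl x ∈ Submodule.span Fq (σl '' (f.rootSet E)) :=
        Submodule.apply_mem_span_image_of_mem_span σl hx
      have h2 : Submodule.span Fq (σl '' (f.rootSet E)) ≤ V := by
        rw [hVdef]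
        apply Submodule.span_mono
        rintro y ⟨β, hβ, rfl⟩
        rw [Polynomial.mem_rootSet'] at hβ ⊢
        refine ⟨hβ.1, ?_⟩
        show aeval (σ β) f = 0
        rw [aeval_algHom_apply σ β f, hβ.2, map_zero]
      exact h2 h1
    have hfixed : ∀ m : ℕ, ∀ σ : E ≃ₐ[F] E,
        σ ((∏ v ∈ hVfin.toFinset, (X - C v)).coeff m)
          = (∏ v ∈ hVfin.toFinset, (X - C v)).coeff m := by
      intro m σ
      have himg : hVfin.toFinset.image σ = hVfin.toFinset := by
        apply Finset.eq_of_subset_of_card_le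
        · intro y hy
          obtain ⟨v, hv, rfl⟩ := Finset.mem_image.mp hy
          exact hVfin.mem_toFinset.mpr (hσmem σ v (hVfin.mem_toFinset.mp hv))
        · rw [Finset.card_image_of_injective _ σ.injective]
      have hmap : (∏ v ∈ hVfin.toFinset, (X - C v)).map (σ : E →+* E)
          = ∏ v ∈ hVfin.toFinset, (X - C v) := by
        rw [Polynomial.map_prod]
        simp only [Polynomial.map_sub, map_X, map_C]
        have hcoe : ∀ v : E, (σ : E →+* E) v = σ v := fun _ => rfl
        simp only [hcoe]
        rw [← Finset.prod_image (g := fun v => σ v)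
          (f := fun u => X - C u) (fun x _ y _ h => σ.injective h), himg]
      conv_rhs => rw [← hmap]
      rw [coeff_map]
      rfl
    have hrange : ∀ i : ℕ, ∃ y : F, algebraMap F E y = (if i ≤ n then b i else 0) := by
      intro i
      by_cases hi : i ≤ n
      · rw [if_pos hi]
        have hbi : b i = (∏ v ∈ hVfin.toFinset, (X - C v)).coeff (q ^ i) := by
          rw [← hP, qlin_coeff hq2 b hi]
        have hmem : (∏ v ∈ hVfin.toFinset, (X - C v)).coeff (q ^ i)
            ∈ (⊥ : IntermediateField F E) := by
          have htop : IntermediateField.fixedField (⊤ : Subgroup (E ≃ₐ[F] E))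
              = (⊥ : IntermediateField F E) :=
            ((IsGalois.tfae (F := F) (E := E)).out 0 1).mp (inferInstance : IsGalois F E)
          rw [← htop]
          exact fun g => hfixed (q ^ i) g
        obtain ⟨y, hy⟩ := IntermediateField.mem_bot.mp hmem
        exact ⟨y, by rw [hy, hbi]⟩
      · exact ⟨0, by rw [if_neg hi, map_zero]⟩
    choose bF hbF using hrange
    refine ⟨bF, ?_, ?_⟩
    · intro h0
      have h1 := hbF n
      rw [h0, map_zero, if_pos (le_refl n), hb1] at h1
      exact zero_ne_one h1
    · rw [← Polynomial.map_dvd_map' (algebraMap F E)]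
      have hmapsum : (∑ i ∈ Finset.range (n + 1), C (bF i) * X ^ q ^ i).map (algebraMap F E)
          = ∑ i ∈ Finset.range (n + 1), C (b i) * X ^ q ^ i := by
        rw [Polynomial.map_sum]
        apply Finset.sum_congr rfl
        intro i hi
        rw [Polynomial.map_mul, Polynomial.map_pow, map_X, map_C, hbF i,
          if_pos (Nat.lt_succ_iff.mp (Finset.mem_range.mp hi))]
      rw [hmapsum, hP]
      apply Splits.dvd_of_roots_le_roots
      · exact hsplit.splits'
      · exact Polynomial.map_ne_zero hf0
      · rw [roots_prod_X_sub_C, Multiset.le_iff_count]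
        intro β
        by_cases hβ : β ∈ (f.map (algebraMap F E)).roots
        · have h1 : (f.map (algebraMap F E)).roots.count β = 1 :=
            Multiset.count_eq_one_of_mem (Polynomial.nodup_roots hf.map) hβ
          have hβV : β ∈ hVfin.toFinset := by
            apply hVfin.mem_toFinset.mpr
            apply Submodule.subset_span
            rw [Polynomial.mem_rootSet']
            refine ⟨Polynomial.map_ne_zero hf0, ?_⟩
            have := (Polynomial.mem_roots (Polynomial.map_ne_zero hf0)).mp hβ
            rwa [Polynomial.IsRoot, Polynomial.eval_map, ← Polynomial.aeval_def] at this
          have h2 : hVfin.toFinset.val.count β = 1 :=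
            Multiset.count_eq_one_of_mem hVfin.toFinset.nodup hβV
          rw [h1, h2]
        · rw [Multiset.count_eq_zero.mpr hβ]
          exact Nat.zero_le _
  · -- lower bound
    rintro d ⟨c, hc0, hcdvd⟩
    set M : E[X] := ∑ i ∈ Finset.range (d + 1), C (algebraMap F E (c i)) * X ^ q ^ i with hMdef
    have hMmap : (∑ i ∈ Finset.range (d + 1), C (c i) * X ^ q ^ i).map (algebraMap F E) = M := by
      rw [Polynomial.map_sum]
      apply Finset.sum_congr rfl
      intro i _
      rw [Polynomial.map_mul, Polynomial.map_pow, map_X, map_C]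
    have hM0 : M ≠ 0 := by
      intro h
      apply hc0
      have hco := qlin_coeff hq2 (fun i => algebraMap F E (c i)) (le_refl d)
      rw [← hMdef, h, coeff_zero] at hco
      exact (map_eq_zero_iff _ (algebraMap F E).injective).mp hco.symm
    have hMz : M.eval 0 = 0 := by
      rw [hMdef, qlin_eval]
      apply Finset.sum_eq_zero
      intro i _
      rw [zero_pow (pow_ne_zero i (by omega : q ≠ 0)), mul_zero]
    let W : Submodule Fq E :=
      { carrier := {x | M.eval x = 0}
        add_mem' := by
          intro x y hx hy
          simp only [Set.mem_setOf_eq] at hx hy ⊢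
          have h := qlin_eval_smul_add (E := E) hq hFq (fun i => algebraMap F E (c i)) d 1 x y
          rw [one_smul, map_one, one_mul, ← hMdef] at h
          rw [h, hx, hy, add_zero]
        zero_mem' := hMz
        smul_mem' := by
          intro c' x hx
          simp only [Set.mem_setOf_eq] at hx ⊢
          have h := qlin_eval_smul_add (E := E) hq hFq (fun i => algebraMap F E (c i)) d c' x 0
          rw [add_zero, ← hMdef, hMz, add_zero] at h
          rw [h, hx, mul_zero] }
    have hWfin' : (W : Set E).Finite :=
      Set.Finite.subset (Polynomial.finite_setOf_isRoot hM0) (fun x hx => hx)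
    haveI : Finite W := hWfin'.to_subtype
    have hVW : V ≤ W := by
      rw [hVdef]
      apply Submodule.span_le.mpr
      intro β hβ
      have haev : aeval β f = 0 := ((Polynomial.mem_rootSet'.mp hβ)).2
      have hdvdE : f.map (algebraMap F E) ∣ M := by
        rw [← hMmap]
        exact Polynomial.map_dvd _ hcdvd
      obtain ⟨g, hg⟩ := hdvdE
      show M.eval β = 0
      rw [hg, Polynomial.eval_mul]
      have : (f.map (algebraMap F E)).eval β = 0 := by
        rw [Polynomial.eval_map, ← Polynomial.aeval_def, haev]
      rw [this, zero_mul]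
    have hmono : Module.finrank Fq V ≤ Module.finrank Fq W := Submodule.finrank_mono hVW
    have hfinW : Module.finrank Fq W ≤ d := by
      haveI : Fintype W := Fintype.ofFinite W
      have hcW : Fintype.card W = q ^ Module.finrank Fq W := by
        rw [Module.card_eq_pow_finrank (K := Fq) (V := W), hFq]
      have hle : Fintype.card W ≤ q ^ d := by
        have hsub : hWfin'.toFinset ⊆ M.roots.toFinset := by
          intro x hx
          rw [Multiset.mem_toFinset, Polynomial.mem_roots hM0]
          exact hWfin'.mem_toFinset.mp hx
        have h1 : hWfin'.toFinset.card ≤ M.roots.toFinset.card := Finset.card_le_card hsub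
        have h2 : M.roots.toFinset.card ≤ Multiset.card M.roots := Multiset.toFinset_card_le _
        have h3 : Multiset.card M.roots ≤ M.natDegree := Polynomial.card_roots' M
        have h4 : M.natDegree ≤ q ^ d := by
          rw [hMdef]
          apply Polynomial.natDegree_sum_le_of_forall_le
          intro i hi
          apply le_trans (Polynomial.natDegree_C_mul_le _ _)
          rw [Polynomial.natDegree_X_pow]
          exact Nat.pow_le_pow_right (by omega) (Nat.lt_succ_iff.mp (Finset.mem_range.mp hi))
        have h5 : Fintype.card W = hWfin'.toFinset.card := by
          have h1' : ((W : Submodule Fq E) : Set E).ncard = hWfin'.toFinset.card :=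
            Set.ncard_eq_toFinset_card _ hWfin'
          have h2' : Nat.card (↥((W : Submodule Fq E) : Set E))
              = ((W : Submodule Fq E) : Set E).ncard := Nat.card_coe_set_eq _
          have h3' : Nat.card (↥((W : Submodule Fq E) : Set E)) = Nat.card W := rfl
          rw [← h1', ← h2', h3', Nat.card_eq_fintype_card]
        omega
      have := hcW ▸ hle
      exact (Nat.pow_le_pow_iff_right (by omega : 1 < q)).mp this
    exact hmono.trans hfinW
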